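/- If g : [0,1] → ℝ is strictly decreasing, nonnegative, T-times monotone, and g(1) = 0, then with g_1 = g and g_{k+1} = -g_k'·g, each g_k (k ≤ T) is strictly decreasing on [0,1] and satisfies g_k(X) > 0 for all X ∈ [0,1). -/

import Mathlib

open Set

/-- `GoodAux m h`: `h` is `m`-times monotone on `[0,1]` in an inductive sense. -/
def GoodAux : ℕ → (ℝ → ℝ) → Prop
  | 0, h => Continuous h ∧ ∀ x ∈ Set.Icc (0:ℝ) 1, 0 ≤ h x
  | m+1, h => Differentiable ℝ h ∧ (∀ x ∈ Set.Icc (0:ℝ) 1, 0 ≤ h x) ∧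
      GoodAux m (fun x => -deriv h x)

lemma GoodAux.nonneg {m : ℕ} {h : ℝ → ℝ} (hg : GoodAux m h) :
    ∀ x ∈ Set.Icc (0:ℝ) 1, 0 ≤ h x := by
  cases m with
  | zero => exact hg.2
  | succ m => exact hg.2.1

lemma GoodAux.continuous {m : ℕ} {h : ℝ → ℝ} (hg : GoodAux m h) : Continuous h := by
  cases m with
  | zero => exact hg.1
  | succ m => exact hg.1.continuous

lemma GoodAux.mono_succ {m : ℕ} {h : ℝ → ℝ} (hg : GoodAux (m+1) h) : GoodAux m h := by
  induction m generalizing h with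
  | zero => exact ⟨hg.1.continuous, hg.2.1⟩
  | succ m ih => exact ⟨hg.1, hg.2.1, ih hg.2.2⟩

lemma GoodAux.mono {m n : ℕ} {h : ℝ → ℝ} (hmn : m ≤ n) (hg : GoodAux n h) : GoodAux m h := by
  induction n with
  | zero =>
    have : m = 0 := by omega
    rwa [this]
  | succ n ihn =>
    rcases Nat.eq_or_lt_of_le hmn with h' | h'
    · rwa [h']
    · exact ihn (by omega) hg.mono_succ

lemma GoodAux.congr {m : ℕ} {h h' : ℝ → ℝ} (he : ∀ x, h x = h' x) (hg : GoodAux m h) :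
    GoodAux m h' := by
  have : h = h' := funext he
  rwa [this] at hg

lemma GoodAux.add {m : ℕ} {u v : ℝ → ℝ} (hu : GoodAux m u) (hv : GoodAux m v) :
    GoodAux m (fun x => u x + v x) := by
  induction m generalizing u v with
  | zero => exact ⟨hu.1.add hv.1, fun x hx => add_nonneg (hu.2 x hx) (hv.2 x hx)⟩
  | succ m ih =>
    refine ⟨hu.1.add hv.1, fun x hx => add_nonneg (hu.2.1 x hx) (hv.2.1 x hx), ?_⟩
    refine (ih hu.2.2 hv.2.2).congr fun x => ?_
    show -deriv u x + -deriv v x = -deriv (fun y => u y + v y) x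
    rw [deriv_fun_add (hu.1 x) (hv.1 x)]
    ring

lemma GoodAux.mul {m : ℕ} {u v : ℝ → ℝ} (hu : GoodAux m u) (hv : GoodAux m v) :
    GoodAux m (fun x => u x * v x) := by
  induction m generalizing u v with
  | zero => exact ⟨hu.1.mul hv.1, fun x hx => mul_nonneg (hu.2 x hx) (hv.2 x hx)⟩
  | succ m ih =>
    refine ⟨hu.1.mul hv.1, fun x hx => mul_nonneg (hu.2.1 x hx) (hv.2.1 x hx), ?_⟩
    have h1 : GoodAux m (fun x => (-deriv u x) * v x) := ih hu.2.2 hv.mono_succ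
    have h2 : GoodAux m (fun x => u x * (-deriv v x)) := ih hu.mono_succ hv.2.2
    refine (h1.add h2).congr fun x => ?_
    show (-deriv u x) * v x + u x * (-deriv v x) = -deriv (fun y => u y * v y) x
    rw [deriv_fun_mul (hu.1 x) (hv.1 x)]
    ring

lemma goodAux_of_signs : ∀ (m : ℕ) (h : ℝ → ℝ), ContDiff ℝ (m : ℕ∞) h →
    (∀ j ≤ m, ∀ x ∈ Set.Icc (0:ℝ) 1, 0 ≤ (-1)^j * iteratedDeriv j h x) → GoodAux m h := by
  intro m
  induction m with
  | zero =>
    intro h hc hs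
    refine ⟨hc.continuous, fun x hx => ?_⟩
    simpa using hs 0 le_rfl x hx
  | succ m ih =>
    intro h hc hs
    have hc' : ContDiff ℝ ((m : ℕ∞) + 1) h := by exact_mod_cast hc
    have hd : Differentiable ℝ h := (contDiff_succ_iff_deriv.mp hc').1
    refine ⟨hd, fun x hx => by simpa using hs 0 (Nat.zero_le _) x hx, ?_⟩
    have hcd : ContDiff ℝ (m : ℕ∞) (deriv h) := (contDiff_succ_iff_deriv.mp hc').2.2
    refine ih (fun x => -deriv h x) (by exact hcd.neg) ?_
    intro j hj x hx
    have : iteratedDeriv j (fun x => -deriv h x) x = -(iteratedDeriv (j+1) h x) := by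
      rw [iteratedDeriv_fun_neg, iteratedDeriv_succ']
    rw [this]
    have := hs (j+1) (by omega) x hx
    calc (0:ℝ) ≤ (-1)^(j+1) * iteratedDeriv (j+1) h x := this
    _ = (-1)^j * -iteratedDeriv (j+1) h x := by ring

/-- constancy trick: zero derivative on an open interval gives equal values. -/
lemma const_of_deriv_zero_Ioo {f : ℝ → ℝ} {a b : ℝ} (hf : Differentiable ℝ f)
    (hz : ∀ x ∈ Set.Ioo a b, deriv f x = 0) {x y : ℝ}
    (hx : x ∈ Set.Ioo a b) (hy : y ∈ Set.Ioo a b) : f x = f y := by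
  wlog hxy : x ≤ y generalizing x y
  · exact (this hy hx (le_of_not_ge hxy)).symm
  have hsub : Set.Icc x y ⊆ Set.Ioo a b := fun z hz =>
    ⟨lt_of_lt_of_le hx.1 hz.1, lt_of_le_of_lt hz.2 hy.2⟩
  have hco : ContinuousOn f (Set.Icc x y) := hf.continuous.continuousOn
  have hdo : DifferentiableOn ℝ f (interior (Set.Icc x y)) := hf.differentiableOn
  have hmono : MonotoneOn f (Set.Icc x y) := by
    refine monotoneOn_of_deriv_nonneg (convex_Icc x y) hco hdo fun z hzz => ?_
    rw [interior_Icc] at hzz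
    rw [hz z (hsub (Set.Ioo_subset_Icc_self hzz))]
  have hanti : AntitoneOn f (Set.Icc x y) := by
    refine antitoneOn_of_deriv_nonpos (convex_Icc x y) hco hdo fun z hzz => ?_
    rw [interior_Icc] at hzz
    rw [hz z (hsub (Set.Ioo_subset_Icc_self hzz))]
  exact le_antisymm (hmono ⟨le_rfl, hxy⟩ ⟨hxy, le_rfl⟩ hxy)
    (hanti ⟨le_rfl, hxy⟩ ⟨hxy, le_rfl⟩ hxy)

/-- If `f` is constant on an open interval, its derivative vanishes there. -/
lemma deriv_zero_of_const_Ioo {f : ℝ → ℝ} {a b : ℝ}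
    (hc : ∀ x ∈ Set.Ioo a b, ∀ y ∈ Set.Ioo a b, f x = f y) {x : ℝ}
    (hx : x ∈ Set.Ioo a b) : deriv f x = 0 := by
  have hev : f =ᶠ[nhds x] fun _ => f x := by
    filter_upwards [Ioo_mem_nhds hx.1 hx.2] with y hy
    exact hc y hy x hx
  rw [hev.deriv_eq, deriv_const]

theorem stmt_16 (T : ℕ) (g : ℝ → ℝ) (hg : ContDiff ℝ ((T : ℕ) : ℕ∞) g)
    (hanti : StrictAntiOn g (Set.Icc (0:ℝ) 1))
    (hpos : ∀ X ∈ Set.Icc (0:ℝ) 1, 0 ≤ g X)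
    (hg1 : g 1 = 0)
    (hmon : ∀ k ≤ T, ∀ X ∈ Set.Icc (0:ℝ) 1, 0 ≤ (-1)^k * iteratedDeriv k g X)
    (gk : ℕ → ℝ → ℝ) (hgk1 : ∀ X : ℝ, gk 1 X = g X)
    (hrec : ∀ k, 1 ≤ k → ∀ X : ℝ, gk (k+1) X = -deriv (gk k) X * g X)
    (k : ℕ) (hk1 : 1 ≤ k) (hkT : k ≤ T) :
    StrictAntiOn (gk k) (Set.Icc (0:ℝ) 1) ∧
    ∀ X ∈ Set.Ico (0:ℝ) 1, 0 < gk k X := by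
  have hGg : GoodAux T g := goodAux_of_signs T g hg hmon
  have hgpos : ∀ x ∈ Set.Ico (0:ℝ) 1, 0 < g x := by
    intro x hx
    have := hanti ⟨hx.1, hx.2.le⟩ (by norm_num) hx.2
    rwa [hg1] at this
  -- main induction
  have main : ∀ k, 1 ≤ k → k ≤ T →
      GoodAux (T - k + 1) (gk k) ∧ gk k 1 = 0 ∧ StrictAntiOn (gk k) (Set.Icc (0:ℝ) 1) := by
    intro k hk1
    induction k, hk1 using Nat.le_induction with
    | base =>
      intro hT
      have he : gk 1 = g := funext hgk1
      rw [he]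
      refine ⟨?_, hg1, hanti⟩
      have : T - 1 + 1 = T := by omega
      rw [this]
      exact hGg
    | succ k hk ih =>
      intro hkT
      have hkT' : k ≤ T := by omega
      obtain ⟨hGk, hk1zero, hkanti⟩ := ih hkT'
      have hTk1 : T - k + 1 = (T - k - 1) + 2 := by omega
      have hGk' : GoodAux ((T - k - 1) + 2) (gk k) := by rwa [hTk1] at hGk
      -- facts about gk k
      have hdk : Differentiable ℝ (gk k) := hGk'.1
      have hGd : GoodAux ((T - k - 1) + 1) (fun x => -deriv (gk k) x) := hGk'.2.2
      have hdd : Differentiable ℝ (fun x => -deriv (gk k) x) := hGd.1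
      have hddk : Differentiable ℝ (deriv (gk k)) := by
        have := hdd.neg
        simpa using this
      have hd2nn : ∀ x ∈ Set.Icc (0:ℝ) 1, 0 ≤ deriv (deriv (gk k)) x := by
        intro x hx
        have := hGd.2.2.nonneg x hx
        rwa [deriv.fun_neg, neg_neg] at this
      have hd1np : ∀ x ∈ Set.Icc (0:ℝ) 1, deriv (gk k) x ≤ 0 := by
        intro x hx
        have := hGd.nonneg x hx
        simpa using this
      have hG2g : GoodAux 2 g := hGg.mono (by omega)
      have hdg : Differentiable ℝ g := hG2g.1
      have hdgnp : ∀ x ∈ Set.Icc (0:ℝ) 1, deriv g x ≤ 0 := by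
        intro x hx
        have := hG2g.2.2.nonneg x hx
        simpa using this
      -- function equality
      have heq : gk (k+1) = fun x => (-deriv (gk k) x) * g x := funext (hrec k hk)
      -- Goodness of gk (k+1)
      have hGnext : GoodAux (T - (k+1) + 1) (gk (k+1)) := by
        have h1 : GoodAux (T - k - 1 + 1) (fun x => (-deriv (gk k) x) * g x) :=
          GoodAux.mul hGd (hGg.mono (by omega))
        have : T - (k+1) + 1 = T - k - 1 + 1 := by omega
        rw [this, heq]
        exact h1
      -- value at 1
      have hval1 : gk (k+1) 1 = 0 := by
        rw [hrec k hk 1, hg1, mul_zero]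
      -- antitone
      have hdnext : Differentiable ℝ (gk (k+1)) := by
        have : T - (k+1) + 1 = (T - (k+1)) + 1 := rfl
        exact hGnext.1
      have hdnextnp : ∀ x ∈ Set.Icc (0:ℝ) 1, deriv (gk (k+1)) x ≤ 0 := by
        intro x hx
        have hG : GoodAux (T - (k+1)) (fun y => -deriv (gk (k+1)) y) := hGnext.2.2
        have := hG.nonneg x hx
        simpa using this
      have hantiOn : AntitoneOn (gk (k+1)) (Set.Icc (0:ℝ) 1) := by
        refine antitoneOn_of_deriv_nonpos (convex_Icc 0 1) hdnext.continuous.continuousOn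
          hdnext.differentiableOn fun x hx => ?_
        rw [interior_Icc] at hx
        exact hdnextnp x (Set.Ioo_subset_Icc_self hx)
      refine ⟨hGnext, hval1, ?_⟩
      -- strictness
      intro a ha b hb hab
      rcases lt_or_eq_of_le (hantiOn ha hb hab.le) with h | h
      · exact h
      exfalso
      -- gk (k+1) constant on [a,b]
      have hconst : ∀ x ∈ Set.Icc a b, gk (k+1) x = gk (k+1) a := by
        intro x hx
        have hxI : x ∈ Set.Icc (0:ℝ) 1 := ⟨ha.1.trans hx.1, hx.2.trans hb.2⟩
        have h1 : gk (k+1) x ≤ gk (k+1) a := hantiOn ha hxI hx.1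
        have h2 : gk (k+1) b ≤ gk (k+1) x := hantiOn hxI hb hx.2
        rw [h] at h2
        exact le_antisymm h1 h2
      have hdz : ∀ x ∈ Set.Ioo a b, deriv (gk (k+1)) x = 0 := by
        intro x hx
        refine deriv_zero_of_const_Ioo (fun z hz w hw => ?_) hx
        rw [hconst z (Set.Ioo_subset_Icc_self hz), hconst w (Set.Ioo_subset_Icc_self hw)]
      -- derivative formula on (a,b)
      have hIab : ∀ x ∈ Set.Ioo a b, x ∈ Set.Ico (0:ℝ) 1 := fun x hx =>
        ⟨ha.1.trans hx.1.le, lt_of_lt_of_le hx.2 hb.2⟩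
      have hform : ∀ x ∈ Set.Ioo a b,
          deriv (deriv (gk k)) x * g x = 0 ∧ deriv (gk k) x * deriv g x = 0 := by
        intro x hx
        have hxI : x ∈ Set.Icc (0:ℝ) 1 := Set.Ico_subset_Icc_self (hIab x hx)
        have hder : deriv (gk (k+1)) x =
            -deriv (deriv (gk k)) x * g x + (-deriv (gk k) x) * deriv g x := by
          rw [heq]
          rw [deriv_fun_mul (hdd x) (hdg x)]
          rw [deriv.fun_neg]
        have h0 := hdz x hx
        rw [hder] at h0
        have hA : 0 ≤ deriv (deriv (gk k)) x * g x :=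
          mul_nonneg (hd2nn x hxI) (hpos x hxI)
        have hB : 0 ≤ deriv (gk k) x * deriv g x := by
          have := mul_nonneg (neg_nonneg.2 (hd1np x hxI)) (neg_nonneg.2 (hdgnp x hxI))
          nlinarith
        constructor <;> nlinarith
      -- deriv (deriv (gk k)) = 0 on (a,b) since g > 0 there
      have hA0 : ∀ x ∈ Set.Ioo a b, deriv (deriv (gk k)) x = 0 := by
        intro x hx
        have hgx : 0 < g x := hgpos x (hIab x hx)
        rcases mul_eq_zero.mp (hform x hx).1 with h' | h'
        · exact h'
        · exact absurd h' (ne_of_gt hgx)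
      -- deriv (gk k) is constant on (a,b)
      have hmid : (a + b) / 2 ∈ Set.Ioo a b := by constructor <;> [linarith; linarith]
      set c := deriv (gk k) ((a+b)/2) with hc
      have hBconst : ∀ x ∈ Set.Ioo a b, deriv (gk k) x = c :=
        fun x hx => const_of_deriv_zero_Ioo hddk hA0 hx hmid
      -- two cases on c
      have hx1 : a + (b-a)/3 ∈ Set.Ioo a b := by constructor <;> [linarith; linarith]
      have hx2 : b - (b-a)/3 ∈ Set.Ioo a b := by constructor <;> [linarith; linarith]
      have hx12 : a + (b-a)/3 < b - (b-a)/3 := by linarith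
      rcases eq_or_ne c 0 with hc0 | hc0
      · -- gk k constant on (a,b): contradict strict anti of gk k
        have : gk k (a + (b-a)/3) = gk k (b - (b-a)/3) := by
          refine const_of_deriv_zero_Ioo hdk (fun x hx => ?_) hx1 hx2
          rw [hBconst x hx, hc0]
        have hlt := hkanti (Set.Ico_subset_Icc_self (hIab _ hx1))
          (Set.Ico_subset_Icc_self (hIab _ hx2)) hx12
        rw [this] at hlt
        exact lt_irrefl _ hlt
      · -- deriv g = 0 on (a,b): contradict strict anti of g
        have hD0 : ∀ x ∈ Set.Ioo a b, deriv g x = 0 := by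
          intro x hx
          have := (hform x hx).2
          rw [hBconst x hx] at this
          rcases mul_eq_zero.mp this with h' | h'
          · exact absurd h' hc0
          · exact h'
        have : g (a + (b-a)/3) = g (b - (b-a)/3) :=
          const_of_deriv_zero_Ioo hdg hD0 hx1 hx2
        have hlt := hanti (Set.Ico_subset_Icc_self (hIab _ hx1))
          (Set.Ico_subset_Icc_self (hIab _ hx2)) hx12
        rw [this] at hlt
        exact lt_irrefl _ hlt
  obtain ⟨hG, h1, hSA⟩ := main k hk1 hkT
  refine ⟨hSA, fun X hX => ?_⟩
  have := hSA (Set.Ico_subset_Icc_self hX) (by norm_num) hX.2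
  rwa [h1] at this
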